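/- Generation-counting virus: for every partial recursive f : ℕ →. ℕ of four (paired) arguments, there exist a code e and a total computable Φ : ℕ → ℕ computed by e (φ_e(y) = Φ(y) for all y) such that for all y, x: φ_{Φ(y)}(x) = f(⟨e, y, x⟩); consequently, defining the infected form at generation y as Φ(y+1), running the infected form computes f(⟨e, y+1, x⟩), so each successive generation carries an incremented counter. -/

import Mathlib

/-- The `e`-th partial computable function in a standard Gödel numbering. -/
def phi (e : ℕ) : ℕ →. ℕ :=
  (Denumerable.ofNat Nat.Partrec.Code e).eval

/-- Generation-counting virus: the explicit recursion theorem plus the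
observation that the infected form at generation `y`, taken as `Φ (y+1)`,
computes `f(⟨e, y+1, x⟩)`, carrying an incremented counter. -/
theorem generation_counting_virus (f : ℕ →. ℕ) (hf : Nat.Partrec f) :
    ∃ (e : ℕ) (Φ : ℕ → ℕ), Computable Φ ∧
      (∀ y : ℕ, phi e y = Part.some (Φ y)) ∧
      (∀ y x : ℕ, phi (Φ y) x = f (Nat.pair e (Nat.pair y x))) ∧
      (∀ y x : ℕ, phi (Φ (y + 1)) x = f (Nat.pair e (Nat.pair (y + 1) x))) := by
  classical
  obtain ⟨cf, hcf⟩ := Nat.Partrec.Code.exists_code.1 hf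
  -- F c y = code of x ↦ f (pair (encode c) (pair y x))
  let F : Nat.Partrec.Code → ℕ →. ℕ := fun c y =>
    Part.some (Encodable.encode (Nat.Partrec.Code.curry
      (Nat.Partrec.Code.curry cf (Encodable.encode c)) y))
  have hF : Partrec₂ F := by
    have hp : Primrec₂ (fun (c : Nat.Partrec.Code) (y : ℕ) =>
        Encodable.encode (Nat.Partrec.Code.curry
          (Nat.Partrec.Code.curry cf (Encodable.encode c)) y)) :=
      Primrec.encode.comp
      (Nat.Partrec.Code.primrec₂_curry.comp
        (Nat.Partrec.Code.primrec₂_curry.comp (Primrec.const cf)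
          (Primrec.encode.comp Primrec.fst)) Primrec.snd)
    exact Computable₂.partrec₂ hp.to_comp
  obtain ⟨c, hc⟩ := Nat.Partrec.Code.fixed_point₂ hF
  refine ⟨Encodable.encode c,
    fun y => Encodable.encode (Nat.Partrec.Code.curry
      (Nat.Partrec.Code.curry cf (Encodable.encode c)) y), ?_, ?_, ?_, ?_⟩
  · exact (Primrec.encode.comp
      (Nat.Partrec.Code.primrec₂_curry.comp
        (Primrec.const _) Primrec.id)).to_comp
  · intro y
    simp [phi, hc, F]
  · intro y x
    simp [phi, Nat.Partrec.Code.eval_curry, hcf]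
  · intro y x
    simp [phi, Nat.Partrec.Code.eval_curry, hcf]
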